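/- Let N1 ≥ 1 and N2 ≥ 1 be integers, let D_na = {0, 1, ..., N1−1} ∪ {(m+1)(N1+1)−1 : 0 ≤ m ≤ N2−1} be the nested array position set with M = N1 + N2, and let n be an integer with 1 ≤ n ≤ N1. Then at the grating-lobe point Δ = 2n/(N1+1), the side lobe height satisfies (N2−1)²/M² ≤ G(Δ; D_na) ≤ (N2+1)²/M², i.e., (N2−1)² ≤ |Σ_{d∈D_na} exp(iπ d Δ)|² ≤ (N2+1)². -/

import Mathlib

open Finset

/-- Two-level nested array position set. -/
def Dna (N1 N2 : ℕ) : Finset ℕ :=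
  Finset.range N1 ∪ (Finset.range N2).image (fun m => (m + 1) * (N1 + 1) - 1)

/-- at the grating-lobe point `Δ = 2n/(N1+1)` with `1 ≤ n ≤ N1`, the side
lobe height satisfies `(N2−1)²/M² ≤ G(Δ; D_na) ≤ (N2+1)²/M²`, i.e.
`(N2−1)² ≤ |Σ_{d∈D_na} exp(iπ d Δ)|² ≤ (N2+1)²`, where `M = N1 + N2`. -/
theorem nested_side_lobe_height (N1 N2 : ℕ) (hN1 : 1 ≤ N1) (hN2 : 1 ≤ N2)
    (n : ℕ) (hn1 : 1 ≤ n) (hn2 : n ≤ N1) :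
    (((N2 : ℝ) - 1) ^ 2 ≤
        (‖∑ d ∈ Dna N1 N2,
          Complex.exp (Complex.I * Real.pi * (d : ℝ) * (2 * (n : ℝ) / ((N1 : ℝ) + 1)))‖) ^ 2 ∧
      (‖∑ d ∈ Dna N1 N2,
          Complex.exp (Complex.I * Real.pi * (d : ℝ) * (2 * (n : ℝ) / ((N1 : ℝ) + 1)))‖) ^ 2 ≤
        ((N2 : ℝ) + 1) ^ 2) ∧
    (((N2 : ℝ) - 1) ^ 2 / ((N1 : ℝ) + (N2 : ℝ)) ^ 2 ≤
        (1 / ((N1 : ℝ) + (N2 : ℝ)) ^ 2) *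
          (‖∑ d ∈ Dna N1 N2,
            Complex.exp (Complex.I * Real.pi * (d : ℝ) * (2 * (n : ℝ) / ((N1 : ℝ) + 1)))‖) ^ 2 ∧
      (1 / ((N1 : ℝ) + (N2 : ℝ)) ^ 2) *
          (‖∑ d ∈ Dna N1 N2,
            Complex.exp (Complex.I * Real.pi * (d : ℝ) * (2 * (n : ℝ) / ((N1 : ℝ) + 1)))‖) ^ 2 ≤
        ((N2 : ℝ) + 1) ^ 2 / ((N1 : ℝ) + (N2 : ℝ)) ^ 2) := by
  set ω : ℂ := Complex.exp (Complex.I * (Real.pi : ℂ) * ((2 * (n : ℝ) / ((N1 : ℝ) + 1) : ℝ) : ℂ))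
    with hωdef
  have hN1c : ((N1 : ℂ) + 1) ≠ 0 := by
    exact_mod_cast (Nat.cast_add_one_ne_zero (R := ℂ) N1)
  have hterm : ∀ d : ℕ,
      Complex.exp (Complex.I * Real.pi * (d : ℝ) * (2 * (n : ℝ) / ((N1 : ℝ) + 1))) = ω ^ d := by
    intro d
    rw [hωdef, ← Complex.exp_nat_mul]
    congr 1
    push_cast
    ring
  have hω_pow : ω ^ (N1 + 1) = 1 := by
    rw [hωdef, ← Complex.exp_nat_mul]
    have heq : ((N1 + 1 : ℕ) : ℂ) *
        (Complex.I * (Real.pi : ℂ) * ((2 * (n : ℝ) / ((N1 : ℝ) + 1) : ℝ) : ℂ)) =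
        ((n : ℤ) : ℂ) * (2 * (Real.pi : ℂ) * Complex.I) := by
      push_cast
      field_simp
    rw [heq]
    exact Complex.exp_int_mul_two_pi_mul_I n
  have hω_ne : ω ≠ 1 := by
    rw [hωdef, Ne, Complex.exp_eq_one_iff]
    rintro ⟨k, hk⟩
    have hne : Complex.I * (Real.pi : ℂ) ≠ 0 :=
      mul_ne_zero Complex.I_ne_zero (by exact_mod_cast Real.pi_ne_zero)
    have h2 : (((2 * (n : ℝ) / ((N1 : ℝ) + 1) : ℝ)) : ℂ) = 2 * (k : ℂ) := by
      apply mul_left_cancel₀ hne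
      linear_combination hk
    have h3 : (2 * (n : ℝ) / ((N1 : ℝ) + 1)) = 2 * (k : ℝ) := by exact_mod_cast h2
    have hN1pos : (0 : ℝ) < (N1 : ℝ) + 1 := by positivity
    have hnpos : (0 : ℝ) < (n : ℝ) := by exact_mod_cast hn1
    have hnle : (n : ℝ) ≤ (N1 : ℝ) := by exact_mod_cast hn2
    have hlo : (0 : ℝ) < 2 * (k : ℝ) := by
      rw [← h3]; positivity
    have hhi : 2 * (k : ℝ) < 2 := by
      rw [← h3]
      rw [div_lt_iff₀ hN1pos]
      linarith
    have hk0 : (0 : ℤ) < k := by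
      have : (0 : ℝ) < (k : ℝ) := by linarith
      exact_mod_cast this
    have hk1 : k < 1 := by
      have : (k : ℝ) < 1 := by linarith
      exact_mod_cast this
    omega
  have habsω : ‖ω‖ = 1 := by
    rw [hωdef, Complex.norm_exp]
    have : (Complex.I * (Real.pi : ℂ) * ((2 * (n : ℝ) / ((N1 : ℝ) + 1) : ℝ) : ℂ)).re = 0 := by
      have heq : Complex.I * (Real.pi : ℂ) * ((2 * (n : ℝ) / ((N1 : ℝ) + 1) : ℝ) : ℂ) =
          ((Real.pi * (2 * (n : ℝ) / ((N1 : ℝ) + 1)) : ℝ) : ℂ) * Complex.I := by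
        push_cast; ring
      rw [heq, Complex.mul_I_re, Complex.ofReal_im, neg_zero]
    rw [this, Real.exp_zero]
  have hdisj : Disjoint (Finset.range N1)
      ((Finset.range N2).image fun m => (m + 1) * (N1 + 1) - 1) := by
    simp only [Finset.disjoint_left, Finset.mem_range, Finset.mem_image]
    rintro a ha ⟨m, hm, rfl⟩
    have : N1 + 1 ≤ (m + 1) * (N1 + 1) := Nat.le_mul_of_pos_left _ (Nat.succ_pos m)
    omega
  have hinj : ∀ x ∈ Finset.range N2, ∀ y ∈ Finset.range N2,
      (x + 1) * (N1 + 1) - 1 = (y + 1) * (N1 + 1) - 1 → x = y := by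
    intro x _ y _ h
    have hx : 1 ≤ (x + 1) * (N1 + 1) :=
      Nat.one_le_iff_ne_zero.mpr (Nat.mul_ne_zero (Nat.succ_ne_zero x) (Nat.succ_ne_zero N1))
    have hy : 1 ≤ (y + 1) * (N1 + 1) :=
      Nat.one_le_iff_ne_zero.mpr (Nat.mul_ne_zero (Nat.succ_ne_zero y) (Nat.succ_ne_zero N1))
    have h1 : (x + 1) * (N1 + 1) = (y + 1) * (N1 + 1) := by omega
    have := Nat.eq_of_mul_eq_mul_right (Nat.succ_pos N1) h1
    omega
  have hB : ∀ m : ℕ, ω ^ ((m + 1) * (N1 + 1) - 1) = ω⁻¹ := by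
    intro m
    have he : (m + 1) * (N1 + 1) - 1 + 1 = (m + 1) * (N1 + 1) := by
      have : 1 ≤ (m + 1) * (N1 + 1) :=
        Nat.one_le_iff_ne_zero.mpr (Nat.mul_ne_zero (Nat.succ_ne_zero m) (Nat.succ_ne_zero N1))
      omega
    have h1 : ω ^ ((m + 1) * (N1 + 1) - 1) * ω = 1 := by
      rw [← pow_succ, he, mul_comm, pow_mul, hω_pow, one_pow]
    exact eq_inv_of_mul_eq_one_left h1
  have hA : ∑ d ∈ Finset.range N1, ω ^ d = -ω ^ N1 := by
    have h0 : ∑ d ∈ Finset.range (N1 + 1), ω ^ d = 0 := by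
      rw [geom_sum_eq hω_ne, hω_pow]
      simp
    rw [Finset.sum_range_succ] at h0
    linear_combination h0
  have hS : ∑ d ∈ Dna N1 N2,
      Complex.exp (Complex.I * Real.pi * (d : ℝ) * (2 * (n : ℝ) / ((N1 : ℝ) + 1))) =
      -ω ^ N1 + (N2 : ℂ) * ω⁻¹ := by
    rw [Dna, Finset.sum_union hdisj, Finset.sum_image hinj]
    simp only [hterm]
    rw [hA]
    congr 1
    rw [Finset.sum_congr rfl (fun m _ => hB m), Finset.sum_const, Finset.card_range,
      nsmul_eq_mul]
  have habsn : ‖ω ^ N1‖ = 1 := by rw [norm_pow, habsω, one_pow]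
  have habsB : ‖(N2 : ℂ) * ω⁻¹‖ = (N2 : ℝ) := by
    rw [norm_mul, norm_inv, habsω, inv_one, mul_one, Complex.norm_natCast]
  set S : ℂ := ∑ d ∈ Dna N1 N2,
      Complex.exp (Complex.I * Real.pi * (d : ℝ) * (2 * (n : ℝ) / ((N1 : ℝ) + 1))) with hSdef
  have habs_le : ‖S‖ ≤ (N2 : ℝ) + 1 := by
    rw [hS]
    have h := norm_add_le (-ω ^ N1) ((N2 : ℂ) * ω⁻¹)
    rw [norm_neg, habsn, habsB] at h
    linarith
  have habs_ge : (N2 : ℝ) - 1 ≤ ‖S‖ := by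
    have h := norm_add_le (-ω ^ N1 + (N2 : ℂ) * ω⁻¹) (ω ^ N1)
    have he : -ω ^ N1 + (N2 : ℂ) * ω⁻¹ + ω ^ N1 = (N2 : ℂ) * ω⁻¹ := by ring
    rw [he, habsn, habsB] at h
    rw [hS]
    linarith
  have hN2' : (1 : ℝ) ≤ (N2 : ℝ) := by exact_mod_cast hN2
  have habsnn : 0 ≤ ‖S‖ := norm_nonneg S
  have h1 : ((N2 : ℝ) - 1) ^ 2 ≤ (‖S‖) ^ 2 :=
    pow_le_pow_left₀ (by linarith) habs_ge 2
  have h2 : (‖S‖) ^ 2 ≤ ((N2 : ℝ) + 1) ^ 2 :=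
    pow_le_pow_left₀ habsnn habs_le 2
  have hMpos : (0 : ℝ) < ((N1 : ℝ) + (N2 : ℝ)) ^ 2 := by
    have : (1 : ℝ) ≤ (N1 : ℝ) := by exact_mod_cast hN1
    positivity
  refine ⟨⟨h1, h2⟩, ?_, ?_⟩
  · rw [div_mul_eq_mul_div, one_mul]
    gcongr
  · rw [div_mul_eq_mul_div, one_mul]
    gcongr
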